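/- (Theorem 5, quantified via the spectral gap.) For every p ≥ 1, r ≥ 1, ρ > 0 and ε > 0 there exists δ > 0 with the following property: for every injective α : Fin p → ℂ with |α i − α j| ≥ ρ whenever i ≠ j, and every B : ℕ → Matrix (Fin p) (Fin p) ℂ with B 0 = Matrix.diagonal α and ‖B k‖ < δ for all 1 ≤ k ≤ r, all formal exponents λ j = (B r − H r) j j of the splitting recursion satisfy |λ j| < ε. -/

import Mathlib

attribute [local instance] Matrix.linftyOpNormedAddCommGroup

private lemma entry_norm_le {p : ℕ} (M : Matrix (Fin p) (Fin p) ℂ) (i j : Fin p) :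
    ‖M i j‖ ≤ ‖M‖ := by
  rw [Matrix.linfty_opNorm_def]
  have h1 : ‖M i j‖₊ ≤ ∑ j', ‖M i j'‖₊ :=
    Finset.single_le_sum (f := fun j' => ‖M i j'‖₊) (fun _ _ => by positivity) (Finset.mem_univ j)
  have h2 : (∑ j', ‖M i j'‖₊) ≤ Finset.univ.sup fun i => ∑ j', ‖M i j'‖₊ :=
    Finset.le_sup (f := fun i => ∑ j', ‖M i j'‖₊) (Finset.mem_univ i)
  exact_mod_cast h1.trans h2

private lemma norm_le_card_mul {p : ℕ} (M : Matrix (Fin p) (Fin p) ℂ) (c : ℝ) (hc : 0 ≤ c)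
    (h : ∀ i j, ‖M i j‖ ≤ c) : ‖M‖ ≤ (p : ℝ) * c := by
  rw [Matrix.linfty_opNorm_def]
  have key : ∀ i : Fin p, (∑ j', ‖M i j'‖₊) ≤ (⟨(p : ℝ) * c, by positivity⟩ : NNReal) := by
    intro i
    apply NNReal.coe_le_coe.1
    rw [NNReal.coe_sum]
    show (∑ j', (‖M i j'‖₊ : ℝ)) ≤ (p : ℝ) * c
    calc (∑ j', (‖M i j'‖₊ : ℝ)) ≤ ∑ _j' : Fin p, c :=
          Finset.sum_le_sum fun j _ => by simpa using h i j
      _ = (p : ℝ) * c := by simp [Finset.sum_const, nsmul_eq_mul]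
  have hs := Finset.sup_le fun i (_ : i ∈ Finset.univ) => key i
  calc ((Finset.univ.sup fun i => ∑ j', ‖M i j'‖₊ : NNReal) : ℝ)
      ≤ ((⟨(p : ℝ) * c, by positivity⟩ : NNReal) : ℝ) := NNReal.coe_le_coe.2 hs
    _ = (p : ℝ) * c := rfl

/-- Theorem 5, quantified via the spectral gap: for every `p ≥ 1`, `r ≥ 1`,
`ρ > 0`, `ε > 0` there is a `δ > 0` such that any local system with leading diagonal term
`diagonal α` of spectral gap `≥ ρ` and `‖B k‖ < δ` for `1 ≤ k ≤ r` has all its formal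
exponents of modulus `< ε`. -/
theorem small_coefficients_give_small_formal_exponents
    (p r : ℕ) (hp : 1 ≤ p) (hr : 1 ≤ r)
    (ρ : ℝ) (hρ : 0 < ρ) (ε : ℝ) (hε : 0 < ε) :
    ∃ δ : ℝ, 0 < δ ∧
      ∀ (α : Fin p → ℂ), Function.Injective α →
        (∀ i j : Fin p, i ≠ j → ρ ≤ ‖α i - α j‖) →
        ∀ (B T H A : ℕ → Matrix (Fin p) (Fin p) ℂ),
          B 0 = Matrix.diagonal α →
          T 0 = 1 → H 0 = 0 → A 0 = B 0 →
          (∀ k, 1 ≤ k → H k =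
            (∑ l ∈ Finset.Ico 1 k, (T l * A (k - l) - B (k - l) * T l)) +
              (if r < k then ((k - r : ℕ) : ℂ) • T (k - r) else 0)) →
          (∀ k, 1 ≤ k → A k = Matrix.diagonal fun j => (B k - H k) j j) →
          (∀ k, 1 ≤ k → ∀ i j : Fin p,
            T k i j = if i = j then 0 else (B k - H k) i j / (α j - α i)) →
          (∀ k, 1 ≤ k → k ≤ r → ‖B k‖ < δ) →
          ∀ j : Fin p, ‖(B r - H r) j j‖ < ε := by
  set D : ℝ := max 1 ((p : ℝ) / ρ) with hD
  have hD1 : (1 : ℝ) ≤ D := le_max_left _ _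
  have hD0 : 0 < D := lt_of_lt_of_le one_pos hD1
  have hr0 : (0 : ℝ) < r := by exact_mod_cast hr
  set δ : ℝ := min (1 / (6 * r * D)) (ε / 4) with hδdef
  have hδ0 : 0 < δ := lt_min (by positivity) (by positivity)
  refine ⟨δ, hδ0, ?_⟩
  intro α hinj hgap B T H A hB0 hT0 hH0 hA0 hHrec hArec hTrec hBsmall
  -- key estimate
  have key : ∀ k, 1 ≤ k → k ≤ r → ‖B k - H k‖ ≤ 2 * δ := by
    intro k
    induction k using Nat.strong_induction_on with
    | _ k ih =>
      intro hk1 hkr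
      -- norm of T l for 1 ≤ l < k
      have hTbound : ∀ l, 1 ≤ l → l < k → ‖T l‖ ≤ D * (2 * δ) := by
        intro l hl1 hlk
        have hBH : ‖B l - H l‖ ≤ 2 * δ := ih l hlk hl1 (le_trans (le_of_lt hlk) hkr)
        have hent : ∀ i j, ‖T l i j‖ ≤ (2 * δ) / ρ := by
          intro i j
          rw [hTrec l hl1 i j]
          by_cases hij : i = j
          · simp [hij]
            positivity
          · simp only [hij, if_false]
            rw [norm_div]
            have hα : ρ ≤ ‖α j - α i‖ := hgap j i (fun h => hij h.symm)
            have hnum : ‖(B l - H l) i j‖ ≤ 2 * δ :=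
              le_trans (entry_norm_le _ i j) hBH
            have hαpos : 0 < ‖α j - α i‖ := lt_of_lt_of_le hρ hα
            calc ‖(B l - H l) i j‖ / ‖α j - α i‖ ≤ (2 * δ) / ‖α j - α i‖ := by
                  gcongr
              _ ≤ (2 * δ) / ρ := by
                  apply div_le_div_of_nonneg_left (by positivity) hρ hα
        have := norm_le_card_mul (T l) ((2 * δ) / ρ) (by positivity) hent
        calc ‖T l‖ ≤ (p : ℝ) * ((2 * δ) / ρ) := this
          _ = ((p : ℝ) / ρ) * (2 * δ) := by ring
          _ ≤ D * (2 * δ) := by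
              have : (p : ℝ) / ρ ≤ D := le_max_right _ _
              nlinarith
      -- norm of A m for 1 ≤ m < k
      have hAbound : ∀ m, 1 ≤ m → m < k → ‖A m‖ ≤ 2 * δ := by
        intro m hm1 hmk
        have hBH : ‖B m - H m‖ ≤ 2 * δ := ih m hmk hm1 (le_trans (le_of_lt hmk) hkr)
        rw [hArec m hm1, Matrix.linfty_opNorm_diagonal]
        refine (pi_norm_le_iff_of_nonneg (by positivity)).2 fun j => ?_
        exact le_trans (entry_norm_le _ j j) hBH
      -- norm of H k
      have hHk : ‖H k‖ ≤ δ := by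
        rw [hHrec k hk1, if_neg (not_lt.2 hkr), add_zero]
        calc ‖∑ l ∈ Finset.Ico 1 k, (T l * A (k - l) - B (k - l) * T l)‖
            ≤ ∑ l ∈ Finset.Ico 1 k, ‖T l * A (k - l) - B (k - l) * T l‖ :=
              norm_sum_le _ _
          _ ≤ ∑ _l ∈ Finset.Ico 1 k, 6 * D * δ ^ 2 := by
              refine Finset.sum_le_sum fun l hl => ?_
              obtain ⟨hl1, hlk⟩ := Finset.mem_Ico.1 hl
              have hkl1 : 1 ≤ k - l := Nat.le_sub_of_add_le (by omega)
              have hklk : k - l < k := by omega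
              have hklr : k - l ≤ r := le_trans (le_of_lt hklk) hkr
              have hT := hTbound l hl1 hlk
              have hA := hAbound (k - l) hkl1 hklk
              have hBkl : ‖B (k - l)‖ ≤ δ :=
                le_of_lt (hBsmall (k - l) hkl1 hklr)
              calc ‖T l * A (k - l) - B (k - l) * T l‖
                  ≤ ‖T l * A (k - l)‖ + ‖B (k - l) * T l‖ := norm_sub_le _ _
                _ ≤ ‖T l‖ * ‖A (k - l)‖ + ‖B (k - l)‖ * ‖T l‖ := by
                    gcongr <;> exact Matrix.linfty_opNorm_mul _ _
                _ ≤ (D * (2 * δ)) * (2 * δ) + δ * (D * (2 * δ)) := by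
                    have h1 := norm_nonneg (T l)
                    have h2 := norm_nonneg (A (k - l))
                    have h3 := norm_nonneg (B (k - l))
                    nlinarith
                _ = 6 * D * δ ^ 2 := by ring
          _ ≤ (r : ℝ) * (6 * D * δ ^ 2) := by
              rw [Finset.sum_const, Nat.card_Ico, nsmul_eq_mul]
              have : ((k - 1 : ℕ) : ℝ) ≤ (r : ℝ) := by
                exact_mod_cast Nat.le_trans (Nat.sub_le k 1) hkr
              have h6 : (0 : ℝ) ≤ 6 * D * δ ^ 2 := by positivity
              exact mul_le_mul_of_nonneg_right this h6
          _ = (6 * r * D * δ) * δ := by ring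
          _ ≤ 1 * δ := by
              gcongr
              have : δ ≤ 1 / (6 * r * D) := min_le_left _ _
              calc 6 * (r : ℝ) * D * δ ≤ 6 * r * D * (1 / (6 * r * D)) := by
                    gcongr
                _ = 1 := by field_simp
          _ = δ := one_mul δ
      calc ‖B k - H k‖ ≤ ‖B k‖ + ‖H k‖ := norm_sub_le _ _
        _ ≤ δ + δ := add_le_add (le_of_lt (hBsmall k hk1 hkr)) hHk
        _ = 2 * δ := by ring
  intro j
  have h1 : ‖(B r - H r) j j‖ ≤ ‖B r - H r‖ := entry_norm_le _ j j
  have h2 : ‖B r - H r‖ ≤ 2 * δ := key r hr le_rfl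
  have h3 : 2 * δ ≤ ε / 2 := by
    have : δ ≤ ε / 4 := min_le_right _ _
    linarith
  linarith
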